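/- Let X₁, X₂ ∈ ℝ^{2×2} satisfy (1/2)(vec(X₁)vec(X₁)ᵀ + vec(X₂)vec(X₂)ᵀ) = C where C is the 4×4 matrix with C₁₁=C₂₂=C₃₃=C₄₄=1, C₁₄=C₄₁=1, C₂₃=C₃₂=−1, and all other entries 0. Then there exist θ ∈ ℝ and a sign ε ∈ {+1,−1} such that X₁ = √2·[[cos θ, ε sin θ],[−ε sin θ, cos θ]] and X₂ = √2·[[sin θ, −ε cos θ],[ε cos θ, sin θ]]. -/

import Mathlib

open Matrix

/-- Column-major vectorization of a `2×2` real matrix. -/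
def vec4 (X : Matrix (Fin 2) (Fin 2) ℝ) : Fin 4 → ℝ :=
  ![X 0 0, X 1 0, X 0 1, X 1 1]

lemma circle_param (x y : ℝ) (hxy : x ^ 2 + y ^ 2 = 2) :
    ∃ θ : ℝ, x = Real.sqrt 2 * Real.cos θ ∧ y = Real.sqrt 2 * Real.sin θ := by
  have hz : (⟨x, y⟩ : ℂ) ≠ 0 := by
    intro hc
    rw [Complex.ext_iff] at hc
    simp at hc
    nlinarith [hc.1, hc.2]
  have habs : ‖(⟨x, y⟩ : ℂ)‖ = Real.sqrt 2 := by
    rw [Complex.norm_def, Complex.normSq_mk]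
    rw [show x * x + y * y = 2 by nlinarith]
  have h2 : Real.sqrt 2 ≠ 0 := by positivity
  refine ⟨Complex.arg ⟨x, y⟩, ?_, ?_⟩
  · rw [Complex.cos_arg hz, habs]
    field_simp
  · rw [Complex.sin_arg, habs]
    field_simp

lemma sq_add_sq_eq_zero {x y : ℝ} (h : x ^ 2 + y ^ 2 = 0) : x = 0 ∧ y = 0 := by
  constructor <;> nlinarith [sq_nonneg x, sq_nonneg y]

lemma key_eps (b q C S e : ℝ) (h2 : b ^ 2 + q ^ 2 = 2) (ho : b * C + q * S = 0)
    (hp : C ^ 2 + S ^ 2 = 1) (he : e = q * C - b * S) : e ^ 2 = 2 := by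
  linear_combination (e + q * C - b * S) * he + (C ^ 2 + S ^ 2) * h2 + 2 * hp
    - (b * C + q * S) * ho

/-- if the sample covariance of `vec(X₁), vec(X₂)` equals the matrix
`C` below, then `X₁, X₂` belong to the stated one-parameter family, up to a sign. -/
theorem fiber_characterization
    (X₁ X₂ : Matrix (Fin 2) (Fin 2) ℝ)
    (h : (1 / 2 : ℝ) • (vecMulVec (vec4 X₁) (vec4 X₁) + vecMulVec (vec4 X₂) (vec4 X₂))
      = !![1, 0, 0, 1; 0, 1, -1, 0; 0, -1, 1, 0; 1, 0, 0, 1]) :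
    ∃ θ ε : ℝ, (ε = 1 ∨ ε = -1) ∧
      X₁ = Real.sqrt 2 •
        !![Real.cos θ, ε * Real.sin θ; -ε * Real.sin θ, Real.cos θ] ∧
      X₂ = Real.sqrt 2 •
        !![Real.sin θ, -ε * Real.cos θ; ε * Real.cos θ, Real.sin θ] := by
  have e00 := congrFun (congrFun h 0) 0
  have e11 := congrFun (congrFun h 1) 1
  have e22 := congrFun (congrFun h 2) 2
  have e33 := congrFun (congrFun h 3) 3
  have e03 := congrFun (congrFun h 0) 3
  have e12 := congrFun (congrFun h 1) 2
  have e01 := congrFun (congrFun h 0) 1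
  simp [vec4, vecMulVec_apply] at e00 e11 e22 e33 e03 e12 e01
  set a := X₁ 0 0 with ha; set b := X₁ 1 0 with hb
  set c := X₁ 0 1 with hc; set d := X₁ 1 1 with hd
  set p := X₂ 0 0 with hp; set q := X₂ 1 0 with hq
  set r := X₂ 0 1 with hr; set s := X₂ 1 1 with hs
  clear h
  have key1 : (a - d) ^ 2 + (p - s) ^ 2 = 0 := by
    linear_combination 2 * e00 + 2 * e33 - 4 * e03
  have key2 : (b + c) ^ 2 + (q + r) ^ 2 = 0 := by
    linear_combination 2 * e11 + 2 * e22 + 4 * e12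
  have hda : d = a := by have := (sq_add_sq_eq_zero key1).1; linarith
  have hsp : s = p := by have := (sq_add_sq_eq_zero key1).2; linarith
  have hcb : c = -b := by have := (sq_add_sq_eq_zero key2).1; linarith
  have hrq : r = -q := by have := (sq_add_sq_eq_zero key2).2; linarith
  obtain ⟨θ, hac, hps⟩ := circle_param a p (by linear_combination 2 * e00)
  have hbq2 : b ^ 2 + q ^ 2 = 2 := by linear_combination 2 * e11
  have hs2 : Real.sqrt 2 ^ 2 = 2 := Real.sq_sqrt (by norm_num)
  have hs2pos : (0 : ℝ) < Real.sqrt 2 := Real.sqrt_pos.mpr (by norm_num)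
  have hpy : Real.cos θ ^ 2 + Real.sin θ ^ 2 = 1 := by
    rw [add_comm]; exact Real.sin_sq_add_cos_sq θ
  have horth : b * Real.cos θ + q * Real.sin θ = 0 := by
    have h2 : a * b + p * q = 0 := e01
    rw [hac, hps] at h2
    have h3 : Real.sqrt 2 * (b * Real.cos θ + q * Real.sin θ) = 0 := by
      linear_combination h2
    exact (mul_eq_zero.mp h3).resolve_left (ne_of_gt hs2pos)
  set ε : ℝ := (q * Real.cos θ - b * Real.sin θ) / Real.sqrt 2 with hε
  have hε' : ε * Real.sqrt 2 = q * Real.cos θ - b * Real.sin θ := by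
    rw [hε, div_mul_cancel₀ _ (ne_of_gt hs2pos)]
  have hε2 : ε ^ 2 = 1 := by
    have hk := key_eps b q (Real.cos θ) (Real.sin θ) _ hbq2 horth hpy rfl
    rw [hε, div_pow, hk, hs2]; norm_num
  have hbe : b = -(ε * (Real.sqrt 2 * Real.sin θ)) := by
    linear_combination Real.sin θ * hε' + Real.cos θ * horth - b * hpy
  have hqe : q = ε * (Real.sqrt 2 * Real.cos θ) := by
    linear_combination -Real.cos θ * hε' + Real.sin θ * horth - q * hpy
  refine ⟨θ, ε, mul_self_eq_one_iff.mp (by rw [← sq]; exact hε2), ?_, ?_⟩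
  · ext i j
    fin_cases i <;> fin_cases j <;>
      simp [← ha, ← hb, ← hc, ← hd, hda, hcb, hbe, hac] <;> ring
  · ext i j
    fin_cases i <;> fin_cases j <;>
      simp [← hp, ← hq, ← hr, ← hs, hsp, hrq, hqe, hps] <;> ring
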